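/- Suppose A_link > 1 and A_adjacency > A_link·C, and suppose C ≥ Δ(G) + 1. Let (x*, y*) be a global minimizer of H_MGC such that x* is one-hot. Then for every edge {u,v} ∈ E and every color c, x*_{u,c}·x*_{v,c} = 0; that is, no edge of G is monochromatic under x*. -/

import Mathlib

open Finset

/-- One-hot penalty term: `A_onehot · ∑_v (1 − ∑_c x_{v,c})²`. -/
noncomputable def Honehot {V : Type*} [Fintype V] (C : ℕ) (Aoh : ℝ)
    (x : V → Fin C → ℝ) : ℝ :=
  Aoh * ∑ v : V, (1 - ∑ c : Fin C, x v c) ^ 2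

/-- Adjacency penalty term: `A_adjacency · ∑_{{u,v}∈E} ∑_c x_{u,c} x_{v,c}`. -/
noncomputable def Hadjacency {V : Type*} [Fintype V] [DecidableEq V]
    (G : SimpleGraph V) [DecidableRel G.Adj] (C : ℕ) (Aadj : ℝ)
    (x : V → Fin C → ℝ) : ℝ :=
  Aadj * ∑ e ∈ G.edgeFinset,
    Sym2.lift ⟨fun u v => ∑ c : Fin C, x u c * x v c,
      fun _ _ => Finset.sum_congr rfl (fun _ _ => mul_comm _ _)⟩ e

/-- Color-count term: `∑_c y_c`. -/
noncomputable def Hcount (C : ℕ) (y : Fin C → ℝ) : ℝ := ∑ c : Fin C, y c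

/-- Linking term: `A_link · ∑_v ∑_c x_{v,c}(1 − y_c)`. -/
noncomputable def Hlink {V : Type*} [Fintype V] (C : ℕ) (Alink : ℝ)
    (x : V → Fin C → ℝ) (y : Fin C → ℝ) : ℝ :=
  Alink * ∑ v : V, ∑ c : Fin C, x v c * (1 - y c)

/-- The one-hot QUBO Hamiltonian for minimum graph coloring. -/
noncomputable def HMGC {V : Type*} [Fintype V] [DecidableEq V]
    (G : SimpleGraph V) [DecidableRel G.Adj] (C : ℕ) (Aoh Aadj Alink : ℝ)
    (x : V → Fin C → ℝ) (y : Fin C → ℝ) : ℝ :=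
  Honehot C Aoh x + Hadjacency G C Aadj x + Hcount C y + Hlink C Alink x y


/-- Greedy coloring: if `C ≥ Δ(G)+1` then `G` has a proper coloring with `C` colors. -/
lemma exists_greedy_coloring {V : Type*} [Fintype V] [DecidableEq V]
    (G : SimpleGraph V) [DecidableRel G.Adj] (C : ℕ) (hC : 1 ≤ C)
    (hCdeg : G.maxDegree + 1 ≤ C) :
    ∃ f : V → Fin C, ∀ u v, G.Adj u v → f u ≠ f v := by
  suffices h : ∀ s : Finset V, ∃ f : V → Fin C,
      ∀ u ∈ s, ∀ v ∈ s, G.Adj u v → f u ≠ f v by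
    obtain ⟨f, hf⟩ := h Finset.univ
    exact ⟨f, fun u v huv => hf u (Finset.mem_univ u) v (Finset.mem_univ v) huv⟩
  intro s
  induction s using Finset.induction with
  | empty => exact ⟨fun _ => ⟨0, hC⟩, by simp⟩
  | @insert a s ha IH =>
    obtain ⟨f, hf⟩ := IH
    set T : Finset (Fin C) := (s.filter (G.Adj a)).image f with hT
    have hTcard : T.card < C := by
      have h1' : T.card ≤ (s.filter (G.Adj a)).card := Finset.card_image_le
      have h2' : (s.filter (G.Adj a)).card ≤ G.degree a := by
        rw [← SimpleGraph.card_neighborFinset_eq_degree]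
        apply Finset.card_le_card
        intro w hw
        rw [SimpleGraph.mem_neighborFinset]
        exact (Finset.mem_filter.mp hw).2
      have h3' := G.degree_le_maxDegree a
      omega
    have hcompl : (Tᶜ : Finset (Fin C)).Nonempty := by
      rw [← Finset.card_pos, Finset.card_compl, Fintype.card_fin]
      omega
    obtain ⟨c, hc⟩ := hcompl
    rw [Finset.mem_compl] at hc
    refine ⟨Function.update f a c, ?_⟩
    intro u hu v hv huv
    rcases Finset.mem_insert.mp hu with rfl | hu' <;>
      rcases Finset.mem_insert.mp hv with rfl | hv'
    · exact absurd huv (G.irrefl)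
    · have hva : v ≠ u := fun h => ha (h ▸ hv')
      rw [Function.update_self, Function.update_of_ne hva]
      intro h
      exact hc (Finset.mem_image.mpr ⟨v, Finset.mem_filter.mpr ⟨hv', huv⟩, h.symm⟩)
    · have hua : u ≠ v := fun h => ha (h ▸ hu')
      rw [Function.update_self, Function.update_of_ne hua]
      intro h
      exact hc (Finset.mem_image.mpr ⟨u, Finset.mem_filter.mpr ⟨hu', huv.symm⟩, h⟩)
    · have h1' : u ≠ a := fun h => ha (h ▸ hu')
      have h2' : v ≠ a := fun h => ha (h ▸ hv')
      rw [Function.update_of_ne h1', Function.update_of_ne h2']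
      exact hf u hu' v hv' huv

/-- If `A_link > 1`, `A_adjacency > A_link·C`, and `C ≥ Δ(G)+1`, then any global
minimizer of `H_MGC` whose `x`-part is one-hot has no monochromatic edge. -/
theorem minimizer_proper_coloring
    {V : Type*} [Fintype V] [DecidableEq V] [Nonempty V]
    (G : SimpleGraph V) [DecidableRel G.Adj]
    (C : ℕ) (hC : 1 ≤ C) (hCdeg : G.maxDegree + 1 ≤ C)
    (Aoh Aadj Alink : ℝ)
    (hAohpos : 0 < Aoh) (hAadjpos : 0 < Aadj) (hAlinkpos : 0 < Alink)
    (h1 : 1 < Alink)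
    (h2 : Alink * (C : ℝ) < Aadj)
    (x : V → Fin C → ℝ) (y : Fin C → ℝ)
    (hx : ∀ v c, x v c = 0 ∨ x v c = 1) (hy : ∀ c, y c = 0 ∨ y c = 1)
    (honehot : ∀ v : V, ∑ c : Fin C, x v c = 1)
    (hmin : ∀ (x' : V → Fin C → ℝ) (y' : Fin C → ℝ),
      (∀ v c, x' v c = 0 ∨ x' v c = 1) → (∀ c, y' c = 0 ∨ y' c = 1) →
      HMGC G C Aoh Aadj Alink x y ≤ HMGC G C Aoh Aadj Alink x' y') :
    ∀ u v : V, G.Adj u v → ∀ c : Fin C, x u c * x v c = 0 := by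

  -- Suppose some edge is monochromatic; derive a contradiction.
  intro u v huv c0
  by_contra hne
  have hxu : x u c0 = 1 := (hx u c0).resolve_left fun h => hne (by rw [h, zero_mul])
  have hxv : x v c0 = 1 := (hx v c0).resolve_left fun h => hne (by rw [h, mul_zero])
  -- Build a proper coloring
  obtain ⟨f, hf⟩ := exists_greedy_coloring G C hC hCdeg
  set x' : V → Fin C → ℝ := fun w c => if f w = c then 1 else 0 with hx'def
  set y' : Fin C → ℝ := fun _ => 1 with hy'def
  have hx'01 : ∀ w c, x' w c = 0 ∨ x' w c = 1 := by
    intro w c; by_cases h : f w = c <;> simp [hx'def, h]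
  have hy'01 : ∀ c, y' c = 0 ∨ y' c = 1 := fun c => Or.inr rfl
  have key := hmin x' y' hx'01 hy'01
  -- Value of HMGC at (x', y')
  have hH' : HMGC G C Aoh Aadj Alink x' y' = (C : ℝ) := by
    have h1' : Honehot C Aoh x' = 0 := by
      unfold Honehot
      have : ∀ w : V, ∑ c : Fin C, x' w c = 1 := by
        intro w; simp [hx'def, Finset.sum_ite_eq]
      simp [this]
    have h2' : Hadjacency G C Aadj x' = 0 := by
      unfold Hadjacency
      rw [Finset.sum_eq_zero, mul_zero]
      intro e he
      induction e using Sym2.ind with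
      | _ a b =>
        rw [SimpleGraph.mem_edgeFinset, SimpleGraph.mem_edgeSet] at he
        rw [Sym2.lift_mk]
        show ∑ c : Fin C, x' a c * x' b c = 0
        apply Finset.sum_eq_zero
        intro c _
        rcases eq_or_ne (f a) c with h | h
        · have : f b ≠ c := fun hb => hf a b he (h.trans hb.symm)
          simp [hx'def, this]
        · simp [hx'def, h]
    have h3' : Hcount C y' = (C : ℝ) := by simp [Hcount, hy'def]
    have h4' : Hlink C Alink x' y' = 0 := by simp [Hlink, hy'def]
    rw [HMGC, h1', h2', h3', h4']; ring
  rw [hH'] at key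
  -- Lower bound for HMGC at (x, y)
  have hx01 : ∀ w c, 0 ≤ x w c := by
    intro w c; rcases hx w c with h | h <;> rw [h] <;> norm_num
  have h1'' : Honehot C Aoh x = 0 := by
    unfold Honehot; simp [honehot]
  have h4'' : 0 ≤ Hlink C Alink x y := by
    unfold Hlink
    apply mul_nonneg hAlinkpos.le
    apply Finset.sum_nonneg; intro w _
    apply Finset.sum_nonneg; intro c _
    apply mul_nonneg (hx01 w c)
    rcases hy c with h | h <;> rw [h] <;> norm_num
  have h3'' : 0 ≤ Hcount C y := by
    unfold Hcount
    apply Finset.sum_nonneg; intro c _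
    rcases hy c with h | h <;> rw [h] <;> norm_num
  have h2'' : Aadj ≤ Hadjacency G C Aadj x := by
    unfold Hadjacency
    have hterm : ∀ e ∈ G.edgeFinset, 0 ≤ Sym2.lift ⟨fun a b => ∑ c : Fin C, x a c * x b c,
        fun _ _ => Finset.sum_congr rfl (fun _ _ => mul_comm _ _)⟩ e := by
      intro e _
      induction e using Sym2.ind with
      | _ a b =>
        rw [Sym2.lift_mk]
        show (0:ℝ) ≤ ∑ c : Fin C, x a c * x b c
        exact Finset.sum_nonneg fun c _ => mul_nonneg (hx01 a c) (hx01 b c)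
    have hmem : s(u, v) ∈ G.edgeFinset := by
      rw [SimpleGraph.mem_edgeFinset, SimpleGraph.mem_edgeSet]; exact huv
    have hone : (1 : ℝ) ≤ Sym2.lift ⟨fun a b => ∑ c : Fin C, x a c * x b c,
        fun _ _ => Finset.sum_congr rfl (fun _ _ => mul_comm _ _)⟩ s(u, v) := by
      rw [Sym2.lift_mk]
      show (1:ℝ) ≤ ∑ c : Fin C, x u c * x v c
      calc (1 : ℝ) = x u c0 * x v c0 := by rw [hxu, hxv]; ring
        _ ≤ ∑ c : Fin C, x u c * x v c :=
          Finset.single_le_sum (fun c _ => mul_nonneg (hx01 u c) (hx01 v c))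
            (Finset.mem_univ c0)
    calc Aadj = Aadj * 1 := (mul_one _).symm
      _ ≤ Aadj * Sym2.lift _ s(u, v) := by
          apply mul_le_mul_of_nonneg_left hone hAadjpos.le
      _ ≤ Aadj * ∑ e ∈ G.edgeFinset, Sym2.lift _ e := by
          apply mul_le_mul_of_nonneg_left _ hAadjpos.le
          exact Finset.single_le_sum hterm hmem
  have hlow : Aadj ≤ HMGC G C Aoh Aadj Alink x y := by
    rw [HMGC, h1'']; linarith
  have hCreal : (1 : ℝ) ≤ (C : ℝ) := by exact_mod_cast hC
  nlinarith [key, hlow, h2, h1, hCreal]
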